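/- Let R be a unital ring and e ∈ R an idempotent such that the two-sided ideal ReR is projective as a left R-module. Then eR is projective as a left eRe-module, and consequently eQ is a projective left eRe-module for every projective left R-module Q. -/

import Mathlib

/-- The underlying additive subgroup `eRe = {x | e * x = x ∧ x * e = x}` of a corner
of a ring. -/
def cornerAddSubgroup (R : Type) [Ring R] (e : R) : AddSubgroup R where
  carrier := {x | e * x = x ∧ x * e = x}
  zero_mem' := by simp
  add_mem' := by
    rintro a b ⟨ha1, ha2⟩ ⟨hb1, hb2⟩
    constructor <;> simp [mul_add, add_mul, ha1, ha2, hb1, hb2]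
  neg_mem' := by
    rintro a ⟨ha1, ha2⟩
    constructor <;> simp [ha1, ha2]

/-- The corner ring `eRe` of a ring `R` at an idempotent `e`; its identity element is `e`. -/
def CornerRing (R : Type) [Ring R] (e : R) (_he : IsIdempotentElem e) : Type :=
  ↥(cornerAddSubgroup R e)

namespace CornerRing

variable {R : Type} [Ring R] {e : R} (he : IsIdempotentElem e)

instance : AddCommGroup (CornerRing R e he) :=
  inferInstanceAs (AddCommGroup ↥(cornerAddSubgroup R e))

instance : Ring (CornerRing R e he) :=
  { (inferInstanceAs (AddCommGroup ↥(cornerAddSubgroup R e)) : AddCommGroup (CornerRing R e he)) with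
    mul := fun x y => ⟨x.1 * y.1, by
      obtain ⟨hx1, hx2⟩ := x.2
      obtain ⟨hy1, hy2⟩ := y.2
      constructor
      · rw [← mul_assoc, hx1]
      · rw [mul_assoc, hy2]⟩
    one := ⟨e, he, he⟩
    mul_assoc := fun x y z => Subtype.ext (mul_assoc x.1 y.1 z.1)
    one_mul := fun x => Subtype.ext x.2.1
    mul_one := fun x => Subtype.ext x.2.2
    left_distrib := fun x y z => Subtype.ext (left_distrib x.1 y.1 z.1)
    right_distrib := fun x y z => Subtype.ext (right_distrib x.1 y.1 z.1)
    zero_mul := fun x => Subtype.ext (zero_mul x.1)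
    mul_zero := fun x => Subtype.ext (mul_zero x.1) }

end CornerRing

/-- For an `R`-module `Q`, the corner module `eQ = {v | e • v = v}`, an `eRe`-module. -/
def CornerMod {R : Type} [Ring R] {e : R} (he : IsIdempotentElem e) (Q : Type)
    [AddCommGroup Q] [Module R Q] : Type :=
  {v : Q // e • v = v}

namespace CornerMod

variable {R : Type} [Ring R] {e : R} (he : IsIdempotentElem e) (Q : Type)
  [AddCommGroup Q] [Module R Q]

instance : AddCommGroup (CornerMod he Q) :=
  inferInstanceAs (AddCommGroup ↥(AddSubgroup.mk
    (AddSubmonoid.mk ⟨{v : Q | e • v = v}, by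
      rintro a b (ha : _ = _) (hb : _ = _)
      show e • (a + b) = a + b
      rw [smul_add, ha, hb]⟩ (by show e • (0:Q) = 0; simp))
    (by rintro a (ha : _ = _); show e • (-a) = -a; rw [smul_neg, ha])))

instance : Module (CornerRing R e he) (CornerMod he Q) where
  smul := fun x v => ⟨x.1 • v.1, by
    show e • (x.1 • v.1) = x.1 • v.1
    rw [← mul_smul, x.2.1]⟩
  one_smul := fun v => Subtype.ext (by
    show e • v.1 = v.1
    exact v.2)
  mul_smul := fun x y v => Subtype.ext (mul_smul x.1 y.1 v.1)
  smul_zero := fun x => Subtype.ext (smul_zero x.1)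
  smul_add := fun x v w => Subtype.ext (smul_add x.1 v.1 w.1)
  add_smul := fun x y v => Subtype.ext (add_smul x.1 y.1 v.1)
  zero_smul := fun v => Subtype.ext (zero_smul R v.1)

end CornerMod

/-- The two-sided ideal `ReR` generated by an element `e`, i.e. `TwoSidedIdeal.span {e}`. -/
noncomputable abbrev ReR (R : Type) [Ring R] (e : R) : TwoSidedIdeal R :=
  TwoSidedIdeal.span {e}

/-- `ReR` as a left ideal (left `R`-submodule of `R`): the span of `{e * r | r ∈ R}`. -/
noncomputable def ReRleft (R : Type) [Ring R] (e : R) : Submodule R R :=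
  Submodule.span R {x : R | ∃ r : R, x = e * r}

section Aux

variable {R : Type} [Ring R]

/-- `val` as an additive hom out of `CornerMod`. -/
def cmVal {e : R} (he : IsIdempotentElem e) (Q : Type) [AddCommGroup Q] [Module R Q] :
    CornerMod he Q →+ Q where
  toFun := Subtype.val
  map_zero' := rfl
  map_add' := fun _ _ => rfl

lemma he_abs {e : R} (he : IsIdempotentElem e) : ∀ y : R, e * (e * y) = e * y := fun y => by
  rw [← mul_assoc, he]

/-- the basic elements `e * t` of `eR`. -/
def bmap {e : R} (he : IsIdempotentElem e) (t : R) : CornerMod he R :=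
  ⟨e * t, show e • (e * t) = e * t from he_abs he t⟩

/-- `r ↦ e * r * e` lands in `eRe`. -/
def feeMap {e : R} (he : IsIdempotentElem e) (r : R) : CornerRing R e he :=
  ⟨e * r * e, by
    constructor
    · rw [← mul_assoc, ← mul_assoc, he]
    · rw [mul_assoc, he]⟩

lemma feeMap_add {e : R} (he : IsIdempotentElem e) (a b : R) :
    feeMap he (a + b) = feeMap he a + feeMap he b :=
  Subtype.ext (by show e * (a + b) * e = e * a * e + e * b * e; rw [mul_add, add_mul])

lemma feeMap_zero {e : R} (he : IsIdempotentElem e) : feeMap he 0 = 0 :=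
  Subtype.ext (by show e * 0 * e = 0; rw [mul_zero, zero_mul])

theorem part1 {e : R} (he : IsIdempotentElem e)
    (hReR : Module.Projective R ↥(ReRleft R e)) :
    Module.Projective (CornerRing R e he) (CornerMod he R) := by
  classical
  haveI := hReR
  set E := CornerRing R e he
  -- the generating family of `ReRleft`
  let v : R → ↥(ReRleft R e) := fun t => ⟨e * t, Submodule.subset_span ⟨t, rfl⟩⟩
  have hsurj : Function.Surjective (Finsupp.linearCombination R v) := by
    intro x
    have key : ∀ y (hy : y ∈ ReRleft R e),
        ∃ g : R →₀ R, Finsupp.linearCombination R v g = ⟨y, hy⟩ := by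
      intro y hy
      refine Submodule.span_induction ?_ ?_ ?_ ?_ hy
      · rintro z ⟨r, rfl⟩
        exact ⟨Finsupp.single r 1, by
          rw [Finsupp.linearCombination_single, one_smul]⟩
      · exact ⟨0, by rw [map_zero]; rfl⟩
      · rintro z w hz hw ⟨g, hg⟩ ⟨g', hg'⟩
        exact ⟨g + g', by rw [map_add, hg, hg']; rfl⟩
      · rintro r z hz ⟨g, hg⟩
        exact ⟨r • g, by rw [map_smul, hg]; rfl⟩
    obtain ⟨g, hg⟩ := key x.1 x.2
    exact ⟨g, hg⟩
  obtain ⟨σ, hσ⟩ := Module.projective_lifting_property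
    (Finsupp.linearCombination R v) LinearMap.id hsurj
  -- embed `eR` into `ReRleft`
  have hmem : ∀ x : CornerMod he R, x.1 ∈ ReRleft R e := fun x =>
    Submodule.subset_span ⟨x.1, (x.2 : e • x.1 = x.1).symm⟩
  let j : CornerMod he R → ↥(ReRleft R e) := fun x => ⟨x.1, hmem x⟩
  -- the splitting maps
  let i₁ : CornerMod he R →ₗ[E] (R →₀ E) :=
    { toFun := fun x => Finsupp.mapRange (feeMap he) (feeMap_zero he) (σ (j x))
      map_add' := fun x y => by
        have hj : j (x + y) = j x + j y := rfl
        rw [hj, map_add, Finsupp.mapRange_add (feeMap_add he)]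
      map_smul' := fun a x => by
        have hj : j (a • x) = a.1 • j x := rfl
        rw [RingHom.id_apply, hj, map_smul]
        ext t
        rw [Finsupp.mapRange_apply, Finsupp.smul_apply, Finsupp.smul_apply,
          Finsupp.mapRange_apply]
        refine Subtype.ext ?_
        show e * (a.1 • σ (j x) t) * e = a.1 * (e * σ (j x) t * e)
        rw [smul_eq_mul, ← mul_assoc, ← mul_assoc, a.2.1, ← mul_assoc, a.2.2] }
  let π₁ : (R →₀ E) →ₗ[E] CornerMod he R := Finsupp.linearCombination E (bmap he)
  refine Module.Projective.of_split i₁ π₁ ?_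
  ext x
  refine Subtype.ext ?_
  show (Finsupp.linearCombination E (bmap he)
      (Finsupp.mapRange (feeMap he) (feeMap_zero he) (σ (j x)))).1 = x.1
  rw [Finsupp.linearCombination_apply,
    Finsupp.sum_mapRange_index (fun t => by rw [zero_smul])]
  have hval : ((σ (j x)).sum fun t c => feeMap he c • bmap he t).1
      = (σ (j x)).sum fun t c => e * (c * (e * t)) := by
    refine (map_finsuppSum (cmVal he R) _ _).trans ?_
    refine Finsupp.sum_congr fun t _ => ?_
    show (e * (σ (j x)) t * e) * (e * t) = e * ((σ (j x)) t * (e * t))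
    rw [mul_assoc (e * (σ (j x)) t) e (e * t), he_abs he t, mul_assoc]
  rw [hval, ← Finsupp.mul_sum]
  have h1 : Finsupp.linearCombination R v (σ (j x)) = j x := by
    have h0 := LinearMap.congr_fun hσ (j x)
    simpa using h0
  have h2 : ((σ (j x)).sum fun t c => c • v t) = j x := by
    rwa [Finsupp.linearCombination_apply] at h1
  have h3 : ((σ (j x)).sum fun t c => c * (e * t)) = x.1 := by
    have h4 := (map_finsuppSum ((ReRleft R e).subtype) (σ (j x))
      (fun t c => c • v t)).symm.trans (congrArg Subtype.val h2)
    refine Eq.trans ?_ h4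
    refine (Finsupp.sum_congr fun t _ => ?_).symm
    show ((σ (j x)) t • v t).1 = (σ (j x)) t * (e * t)
    rw [Submodule.coe_smul]
    rfl
  rw [h3]
  exact x.2

theorem part2 {e : R} (he : IsIdempotentElem e)
    (h1 : Module.Projective (CornerRing R e he) (CornerMod he R))
    (Q : Type) [AddCommGroup Q] [Module R Q] (hQ : Module.Projective R Q) :
    Module.Projective (CornerRing R e he) (CornerMod he Q) := by
  classical
  set E := CornerRing R e he
  set N := CornerMod he R
  haveI : Module.Projective E N := h1
  haveI : Module.Projective E (Q →₀ N) :=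
    Module.Projective.of_equiv (finsuppLequivDFinsupp (M := N) (ι := Q) E).symm
  obtain ⟨s, hs⟩ := hQ.out
  have hfe_add : ∀ a b : R, bmap he (a + b) = bmap he a + bmap he b := fun a b =>
    Subtype.ext (by show e * (a + b) = e * a + e * b; rw [mul_add])
  have hfe_zero : bmap he (0 : R) = 0 := Subtype.ext (by show e * 0 = 0; rw [mul_zero])
  let i₂ : CornerMod he Q →ₗ[E] (Q →₀ N) :=
    { toFun := fun x => Finsupp.mapRange (bmap he) hfe_zero (s x.1)
      map_add' := fun x y => by
        have hv : (x + y).1 = x.1 + y.1 := rfl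
        rw [hv, map_add, Finsupp.mapRange_add hfe_add]
      map_smul' := fun a x => by
        have hv : (a • x).1 = a.1 • x.1 := rfl
        rw [RingHom.id_apply, hv, map_smul]
        ext p
        rw [Finsupp.mapRange_apply, Finsupp.smul_apply, Finsupp.smul_apply,
          Finsupp.mapRange_apply]
        refine Subtype.ext ?_
        show e * (a.1 • s x.1 p) = a.1 • (e * s x.1 p)
        rw [smul_eq_mul, smul_eq_mul, ← mul_assoc, a.2.1, ← mul_assoc, a.2.2] }
  let φ : Q → (N →ₗ[E] CornerMod he Q) := fun p =>
    { toFun := fun c => ⟨c.1 • p, by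
        rw [← mul_smul, show e * c.1 = c.1 from c.2]⟩
      map_add' := fun c d => Subtype.ext (by
        show ((c + d).1 : R) • p = c.1 • p + d.1 • p
        rw [show ((c + d).1 : R) = c.1 + d.1 from rfl, add_smul])
      map_smul' := fun a c => Subtype.ext (by
        show ((a • c).1 : R) • p = a.1 • (c.1 • p)
        rw [show ((a • c).1 : R) = a.1 * c.1 from rfl, mul_smul]) }
  let π₂ : (Q →₀ N) →ₗ[E] CornerMod he Q := Finsupp.lsum ℕ φ
  refine Module.Projective.of_split i₂ π₂ ?_
  ext x
  refine Subtype.ext ?_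
  show ((Finsupp.lsum ℕ φ) (Finsupp.mapRange (bmap he) hfe_zero (s x.1))).1 = x.1
  rw [Finsupp.lsum_apply, Finsupp.sum_mapRange_index (fun p => by rw [map_zero])]
  have hval : ((s x.1).sum fun p c => φ p (bmap he c)).1
      = (s x.1).sum fun p c => e • (c • p) := by
    refine (map_finsuppSum (cmVal he Q) _ _).trans ?_
    refine Finsupp.sum_congr fun p _ => ?_
    show (e * s x.1 p) • p = e • ((s x.1 p) • p)
    rw [mul_smul]
  rw [hval, ← Finsupp.smul_sum]
  have hx : ((s x.1).sum fun p c => c • p) = x.1 := by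
    have h0 := hs x.1
    rwa [Finsupp.linearCombination_apply] at h0
  rw [hx]
  exact x.2

end Aux

/-- If `ReR` is projective as a left `R`-module, then `eR` is projective as a left
`eRe`-module, and consequently `eQ` is a projective left `eRe`-module for every
projective left `R`-module `Q`. -/
theorem corner_projective (R : Type) [Ring R] (e : R) (he : IsIdempotentElem e)
    (hReR : Module.Projective R ↥(ReRleft R e)) :
    Module.Projective (CornerRing R e he) (CornerMod he R) ∧
      ∀ (Q : Type) [AddCommGroup Q] [Module R Q], Module.Projective R Q →
        Module.Projective (CornerRing R e he) (CornerMod he Q) := by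
  exact ⟨part1 he hReR, fun Q _ _ hQ => part2 he (part1 he hReR) Q hQ⟩
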